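/- Let κ > μ be a regular cardinal and G a graph with vertex set κ. Suppose the set T_G of ordinals α < κ such that cf(α) = cf(μ), the order type of N(α) ∩ α is μ, and sup(N(α) ∩ α) = α, is stationary in κ. Then G admits no good well-ordering witnessing colouring number at most μ; that is, col(G) > μ. -/

import Mathlib

open Cardinal

universe u v

/-- A well-ordering of the vertices of `G` in which every vertex has
fewer than `μ` neighbours preceding it (a *good* well-ordering for `μ`). -/
def HasGoodOrder {V : Type u} (G : SimpleGraph V) (μ : Cardinal.{u}) : Prop :=
  ∃ r : V → V → Prop, IsWellOrder V r ∧ ∀ v : V, #{w : V | G.Adj v w ∧ r w v} < μ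

/-- The colouring number of `G`: the least cardinal `κ` admitting a
well-ordering of the vertices in which each vertex has fewer than `κ`
earlier neighbours. -/
noncomputable def col {V : Type u} (G : SimpleGraph V) : Cardinal.{u} :=
  sInf {μ : Cardinal.{u} | HasGoodOrder G μ}

/-- `X` is robust (for `μ`): every vertex outside `X` has fewer than `μ`
neighbours inside `X`. -/
def Robust {V : Type u} (G : SimpleGraph V) (μ : Cardinal.{u}) (X : Set V) : Prop :=
  ∀ v ∉ X, #(G.neighborSet v ∩ X : Set V) < μ

/-- `G` contains a `μ`-barricade as a subgraph: disjoint vertex sets `A`, `B`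
with `|A| < |B|` such that every vertex of `B` has at least `μ` neighbours in `A`. -/
def HasBarricade {V : Type u} (G : SimpleGraph V) (μ : Cardinal.{u}) : Prop :=
  ∃ A B : Set V, Disjoint A B ∧ #A < #B ∧
    ∀ b ∈ B, μ ≤ #(G.neighborSet b ∩ A : Set V)

/-- `G` contains a `μ`-obstruction of type I as a subgraph: disjoint sets `A`, `B`
with `|A| = λ ≥ μ`, `|B| = λ⁺`, every vertex of `B` having at least `μ`
neighbours in `A` and every vertex of `A` having `λ⁺` neighbours in `B`. -/
def HasTypeIObstruction {V : Type u} (G : SimpleGraph V) (μ : Cardinal.{u}) : Prop :=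
  ∃ (A B : Set V) (lam : Cardinal.{u}), Disjoint A B ∧ μ ≤ lam ∧
    #A = lam ∧ #B = Order.succ lam ∧
    (∀ b ∈ B, μ ≤ #(G.neighborSet b ∩ A : Set V)) ∧
    (∀ a ∈ A, #(G.neighborSet a ∩ B : Set V) = Order.succ lam)

/-- `G` itself is a `μ`-obstruction of type I: a bipartite graph with
bipartition `(A, B)` satisfying the type I conditions. -/
def IsTypeIObstruction {V : Type u} (G : SimpleGraph V) (μ : Cardinal.{u}) : Prop :=
  ∃ (A B : Set V) (lam : Cardinal.{u}), Disjoint A B ∧ A ∪ B = Set.univ ∧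
    (∀ a b, G.Adj a b → (a ∈ A ∧ b ∈ B) ∨ (a ∈ B ∧ b ∈ A)) ∧
    μ ≤ lam ∧ #A = lam ∧ #B = Order.succ lam ∧
    (∀ b ∈ B, μ ≤ #(G.neighborSet b ∩ A : Set V)) ∧
    (∀ a ∈ A, #(G.neighborSet a ∩ B : Set V) = Order.succ lam)

/-- `C` is closed and unbounded in the ordinal `o`. -/
def IsClubIn (C : Set Ordinal.{v}) (o : Ordinal.{v}) : Prop :=
  (∀ a < o, ∃ b ∈ C, a ≤ b ∧ b < o) ∧
  (∀ a < o, a ≠ 0 → sSup (C ∩ Set.Iio a) = a → a ∈ C)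

/-- `S` is stationary in the ordinal `o`: it meets every club subset of `o`. -/
def IsStationaryIn (S : Set Ordinal.{v}) (o : Ordinal.{v}) : Prop :=
  ∀ C : Set Ordinal.{v}, IsClubIn C o → (S ∩ C ∩ Set.Iio o).Nonempty

/-- The set `T_H` of vertices `α` (ordinals) with `cf α = cf μ`, whose set of
neighbours below `α` has order type `μ` and supremum `α`. -/
noncomputable def typeIITarget (H : SimpleGraph Ordinal.{v}) (μ : Cardinal.{v}) :
    Set Ordinal.{v} :=
  {α | α.cof = μ.ord.cof ∧
    Ordinal.type (Subrel ((· < ·) : Ordinal.{v} → Ordinal.{v} → Prop)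
      (· ∈ H.neighborSet α ∩ Set.Iio α)) = Ordinal.lift.{v + 1} μ.ord ∧
    sSup (H.neighborSet α ∩ Set.Iio α) = α}

/-- `H` is a `μ`-obstruction of type II with vertex set the regular cardinal
`κ > μ` (realised as the ordinals below `κ`): `T_H` is stationary in `κ`. -/
def IsTypeIIObstruction (H : SimpleGraph Ordinal.{v}) (μ κ : Cardinal.{v}) : Prop :=
  μ < κ ∧ κ.IsRegular ∧ (∀ a b, H.Adj a b → a < κ.ord ∧ b < κ.ord) ∧
  IsStationaryIn (typeIITarget H μ) κ.ord

/-- `G` contains a `μ`-obstruction of type II as a subgraph. -/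
def HasTypeIIObstruction {V : Type u} (G : SimpleGraph V) (μ : Cardinal.{v}) : Prop :=
  ∃ (κ : Cardinal.{v}) (H : SimpleGraph Ordinal.{v}) (f : Ordinal.{v} → V),
    Set.InjOn f (Set.Iio κ.ord) ∧ (∀ a b, H.Adj a b → G.Adj (f a) (f b)) ∧
    IsTypeIIObstruction H μ κ

/-- `G` contains a complete subgraph on `μ` vertices. -/
def HasCompleteSubgraph {V : Type u} (G : SimpleGraph V) (μ : Cardinal.{u}) : Prop :=
  ∃ S : Set V, #S = μ ∧ S.Pairwise G.Adj

/-- `G` contains an induced copy of the complete bipartite graph `K_{k,ω}`. -/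
def HasInducedKkOmega {V : Type u} (G : SimpleGraph V) (k : ℕ) : Prop :=
  ∃ A B : Set V, Disjoint A B ∧ #A = (k : Cardinal.{u}) ∧ #B = ℵ₀ ∧
    (∀ a ∈ A, ∀ b ∈ B, G.Adj a b) ∧
    (∀ a ∈ A, ∀ a' ∈ A, a ≠ a' → ¬ G.Adj a a') ∧
    (∀ b ∈ B, ∀ b' ∈ B, b ≠ b' → ¬ G.Adj b b')

section aux

open Ordinal

/-- A set of ordinals below `o` of cardinality less than the cofinality of `o`
is bounded strictly below `o`. -/
lemma sSup_lt_ord_of_small {o : Ordinal.{0}} (ho : 0 < o) {S : Set Ordinal.{0}}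
    (hS : ∀ x ∈ S, x < o) (hcard : #S < Cardinal.lift.{1} o.cof) : sSup S < o := by
  rcases S.eq_empty_or_nonempty with rfl | hne
  · simpa using ho
  · obtain ⟨c, hc, hlift⟩ := Cardinal.lt_lift_iff.1 hcard
    have hequiv : Nonempty (S ≃ ULift.{1} c.out) := by
      rw [← Cardinal.eq, Cardinal.mk_uLift, Cardinal.mk_out, hlift]
    obtain ⟨e⟩ := hequiv
    set f : c.out → Ordinal.{0} := fun i => (e.symm ⟨i⟩).1 with hf
    have hfo : ∀ i, f i < o := fun i => hS _ (e.symm ⟨i⟩).2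
    have hsup : iSup f < o := Ordinal.iSup_lt_ord (by rwa [Cardinal.mk_out]) hfo
    refine lt_of_le_of_lt (csSup_le hne ?_) hsup
    intro x hx
    have hup : ({ down := (e ⟨x, hx⟩).down } : ULift.{1} c.out) = e ⟨x, hx⟩ := rfl
    have hx' : x = f (e ⟨x, hx⟩).down := by
      rw [hf]
      exact (congrArg Subtype.val (e.symm_apply_apply ⟨x, hx⟩)).symm
    rw [hx']
    exact le_ciSup (Ordinal.bddAbove_range f) _

end aux


/-- a `μ`-obstruction of type II (graph on a regular cardinal
`κ > μ` with `T_G` stationary) admits no good well-ordering for `μ`. -/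
theorem stmt1 (μ κ : Cardinal.{0}) (hμ : ℵ₀ ≤ μ) (G : SimpleGraph Ordinal.{0})
    (h : IsTypeIIObstruction G μ κ) :
    ¬ HasGoodOrder (G.induce (Set.Iio κ.ord)) (Cardinal.lift.{1} μ) := by
  obtain ⟨hμκ, hreg, -, hstat⟩ := h
  rintro ⟨r, hwo, hbd⟩
  have hκinf : ℵ₀ ≤ κ := hμ.trans hμκ.le
  have hκlim : Order.IsSuccLimit κ.ord := Cardinal.isSuccLimit_ord hκinf
  have hκpos : (0 : Ordinal) < κ.ord := hκlim.pos
  -- the set of earlier neighbours of a vertex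
  set E : ↥(Set.Iio κ.ord) → Set ↥(Set.Iio κ.ord) := fun v => {w | (G.induce (Set.Iio κ.ord)).Adj v w ∧ r w v} with hE
  have hEcard : ∀ v, #(E v) < Cardinal.lift.{1} μ := hbd
  -- the set of (values of) earlier neighbours of vertices below δ
  set A : Ordinal.{0} → Set Ordinal.{0} :=
    fun δ => ⋃ v ∈ {v : ↥(Set.Iio κ.ord) | v.1 < δ}, (Subtype.val '' E v) with hA
  have hAsub : ∀ δ, ∀ x ∈ A δ, x < κ.ord := by
    intro δ x hx
    simp only [hA, Set.mem_iUnion, Set.mem_image] at hx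
    obtain ⟨v, -, w, -, rfl⟩ := hx
    exact w.2
  have hAbdd : ∀ δ, BddAbove (A δ) := fun δ => ⟨κ.ord, fun x hx => (hAsub δ x hx).le⟩
  have hAcard : ∀ δ < κ.ord, #(A δ) < Cardinal.lift.{1} κ := by
    intro δ hδ
    have h1 : #(A δ) ≤ #{v : ↥(Set.Iio κ.ord) | v.1 < δ} * ⨆ v : {v : ↥(Set.Iio κ.ord) | v.1 < δ}, #(Subtype.val '' E v.1) :=
      Cardinal.mk_biUnion_le _ _
    have h2 : #{v : ↥(Set.Iio κ.ord) | v.1 < δ} ≤ Cardinal.lift.{1} δ.card := by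
      have hinj : Function.Injective
          (fun v : {v : ↥(Set.Iio κ.ord) | v.1 < δ} => (⟨v.1.1, v.2⟩ : Set.Iio δ)) := by
        intro a b hab
        simp only [Subtype.mk.injEq] at hab
        exact Subtype.ext (Subtype.ext (congrArg (fun x : Set.Iio δ => x.1) hab))
      calc #{v : ↥(Set.Iio κ.ord) | v.1 < δ} ≤ #(Set.Iio δ) := Cardinal.mk_le_of_injective hinj
        _ = Cardinal.lift.{1} δ.card := Ordinal.mk_Iio_ordinal δ
    have h3 : (⨆ v : {v : ↥(Set.Iio κ.ord) | v.1 < δ}, #(Subtype.val '' E v.1)) ≤ Cardinal.lift.{1} μ := by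
      refine ciSup_le' fun v => ?_
      exact le_of_lt (lt_of_le_of_lt Cardinal.mk_image_le (hEcard v.1))
    have h4 : Cardinal.lift.{1} δ.card * Cardinal.lift.{1} μ < Cardinal.lift.{1} κ := by
      rw [← Cardinal.lift_mul, Cardinal.lift_lt]
      exact Cardinal.mul_lt_of_lt hκinf ((Cardinal.lt_ord.1 hδ)) hμκ
    exact lt_of_le_of_lt (h1.trans (mul_le_mul' h2 h3)) h4
  set F : Ordinal.{0} → Ordinal.{0} := fun δ => sSup (A δ) with hF
  have hFlt : ∀ δ < κ.ord, F δ < κ.ord := by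
    intro δ hδ
    refine sSup_lt_ord_of_small hκpos (hAsub δ) ?_
    rw [hreg.cof_eq]
    exact hAcard δ hδ
  have hFmem : ∀ (v : ↥(Set.Iio κ.ord)) (w : ↥(Set.Iio κ.ord)), w ∈ E v → ∀ δ, v.1 < δ → w.1 ≤ F δ := by
    intro v w hw δ hv
    refine le_csSup (hAbdd δ) ?_
    exact Set.mem_biUnion hv ⟨w, hw, rfl⟩
  -- the club of ordinals closed under earlier neighbours
  set C : Set Ordinal.{0} := {δ | ∀ v : ↥(Set.Iio κ.ord), v.1 < δ → ∀ w ∈ E v, w.1 < δ} with hC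
  have hclub : IsClubIn C κ.ord := by
    constructor
    · -- unbounded
      intro a ha
      set g : ℕ → Ordinal.{0} := fun n => Nat.rec a (fun _ ih => max (F ih) ih + 1) n with hg
      have hg0 : g 0 = a := rfl
      have hgs : ∀ n, g (n + 1) = max (F (g n)) (g n) + 1 := fun n => rfl
      have hglt : ∀ n, g n < κ.ord := by
        intro n
        induction n with
        | zero => exact ha
        | succ n ih =>
          rw [hgs, Ordinal.add_one_eq_succ]
          exact hκlim.succ_lt (max_lt (hFlt _ ih) ih)
      set b : Ordinal.{0} := ⨆ n, g n with hb
      have hbκ : b < κ.ord := by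
        refine Ordinal.iSup_lt_ord ?_ hglt
        rw [Cardinal.mk_nat, hreg.cof_eq]
        exact hμ.trans_lt hμκ
      refine ⟨b, ?_, ?_, hbκ⟩
      · intro v hv w hw
        obtain ⟨n, hn⟩ := (lt_ciSup_iff (Ordinal.bddAbove_range g)).1 hv
        have h1 : w.1 ≤ F (g n) := hFmem v w hw (g n) hn
        have h2 : w.1 < g (n + 1) := by
          rw [hgs]
          exact lt_of_le_of_lt (h1.trans (le_max_left _ _)) (lt_add_one _)
        exact lt_of_lt_of_le h2 (le_ciSup (Ordinal.bddAbove_range g) (n + 1))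
      · rw [← hg0]
        exact le_ciSup (Ordinal.bddAbove_range g) 0
    · -- closed
      intro a ha ha0 hsup
      intro v hv w hw
      have hne : (C ∩ Set.Iio a).Nonempty := by
        by_contra hcon
        rw [Set.not_nonempty_iff_eq_empty] at hcon
        rw [hcon, csSup_empty] at hsup
        exact ha0 hsup.symm
      have : ∃ c ∈ C ∩ Set.Iio a, v.1 < c := by
        by_contra hcon
        push_neg at hcon
        have : sSup (C ∩ Set.Iio a) ≤ v.1 := csSup_le hne hcon
        rw [hsup] at this
        exact absurd hv (not_lt_of_ge this)
      obtain ⟨c, ⟨hcC, hca⟩, hvc⟩ := this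
      exact lt_trans (hcC v hvc w hw) hca
  obtain ⟨α, ⟨hT, hCα⟩, hακ⟩ := hstat C hclub
  have hακ' : α < κ.ord := hακ
  set vα : ↥(Set.Iio κ.ord) := ⟨α, hακ'⟩ with hvα
  set N : Set Ordinal.{0} := G.neighborSet α ∩ Set.Iio α with hN
  -- N has cardinality (lift) μ
  have hNcard : #N = Cardinal.lift.{1} μ := by
    have h1 := Ordinal.card_type (Subrel ((· < ·) : Ordinal.{0} → Ordinal.{0} → Prop) (· ∈ N))
    rw [hT.2.1] at h1
    rw [← h1, ← Ordinal.lift_card, Cardinal.card_ord]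
  -- some neighbour β < α of α lies r-after α
  have hkey : ∃ β : N, ¬ r ⟨β.1, lt_trans β.2.2 hακ'⟩ vα := by
    by_contra hcon
    push_neg at hcon
    set f : N → E vα := fun β =>
      ⟨⟨β.1, lt_trans β.2.2 hακ'⟩, by
        refine ⟨?_, hcon β⟩
        have : G.Adj α β.1 := β.2.1
        exact this⟩ with hf
    have hfinj : Function.Injective f := by
      intro a b hab
      exact Subtype.ext (congrArg (fun x => (x : E vα).1.1) hab)
    have : #N ≤ #(E vα) := Cardinal.mk_le_of_injective hfinj
    rw [hNcard] at this
    exact absurd (lt_of_le_of_lt this (hEcard vα)) (lt_irrefl _)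
  obtain ⟨β, hβr⟩ := hkey
  set vβ : ↥(Set.Iio κ.ord) := ⟨β.1, lt_trans β.2.2 hακ'⟩ with hvβ
  have hne : vβ ≠ vα := by
    intro hcon
    have : β.1 = α := congrArg Subtype.val hcon
    exact absurd (this ▸ β.2.2) (lt_irrefl α)
  have htri : r vβ vα ∨ vβ = vα ∨ r vα vβ := by
    haveI := hwo
    exact trichotomous vβ vα
  have hrαβ : r vα vβ := by
    rcases htri with h1 | h2 | h3
    · exact absurd h1 hβr
    · exact absurd h2 hne
    · exact h3
  have hmem : vα ∈ E vβ := by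
    refine ⟨?_, hrαβ⟩
    have : G.Adj β.1 α := (G.adj_symm β.2.1)
    exact this
  have : (vα : ↥(Set.Iio κ.ord)).1 < α := hCα vβ β.2.2 vα hmem
  exact absurd this (lt_irrefl α)
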